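/- For a chain structural model X₁ → X₂ → ⋯ → X_N with Xₙ = fₙ(X_{n−1}) + Eₙ (and X₁ = f₁ + E₁), where the Eₙ are independent, the joint law of (X₁,…,X_N) factorizes as the law of X₁ times the product of the conditional (Markov kernel) laws of Xₙ given X_{n−1}: that is, the joint law equals the composition of the kernel chain κ₁ ⊗ κ₂ ⊗ ⋯ ⊗ κ_N where κₙ(x_{n−1}) is the law of fₙ(x_{n−1}) + Eₙ. -/

import Mathlib

open MeasureTheory ProbabilityTheory

/-- The measure on `Fin (n+1) → ℝ` obtained by composing an initial law `μ` with the
Markov kernel chain `κ 1, κ 2, …, κ n` (κ m is the conditional law of the (m+1)-st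
coordinate given the m-th). -/
noncomputable def chainMeasure (μ : Measure ℝ) (κ : ℕ → ℝ → Measure ℝ) :
    (n : ℕ) → Measure (Fin (n + 1) → ℝ)
  | 0 => μ.map (fun x _ => x)
  | (n + 1) => (chainMeasure μ κ n).bind
      (fun v => (κ (n + 1) (v (Fin.last n))).map (fun y => Fin.snoc v y))

/-- The solution map of the chain: from the noise tuple to the state tuple. -/
noncomputable def chainFun (c : ℝ) (f : ℕ → ℝ → ℝ) :
    (n : ℕ) → (Fin (n + 1) → ℝ) → (Fin (n + 1) → ℝ)
  | 0 => fun e _ => c + e 0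
  | (n + 1) => fun e =>
      Fin.snoc (chainFun c f n (Fin.init e))
        (f (n + 1) (chainFun c f n (Fin.init e) (Fin.last n)) + e (Fin.last (n + 1)))

lemma measurable_snoc_comp {α : Type*} [MeasurableSpace α] {n : ℕ}
    {A : α → (Fin n → ℝ)} {B : α → ℝ} (hA : Measurable A) (hB : Measurable B) :
    Measurable (fun a => (Fin.snoc (A a) (B a) : Fin (n + 1) → ℝ)) := by
  apply measurable_pi_lambda
  intro i
  refine Fin.lastCases ?_ ?_ i
  · simpa [Fin.snoc_last] using hB
  · intro j
    simp only [Fin.snoc_castSucc]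
    exact (measurable_pi_apply j).comp hA

lemma measurable_chainFun (c : ℝ) (f : ℕ → ℝ → ℝ) (hf : ∀ n, Measurable (f n)) :
    ∀ n, Measurable (chainFun c f n) := by
  intro n
  induction n with
  | zero =>
    apply measurable_pi_lambda
    intro _
    exact measurable_const.add (measurable_pi_apply 0)
  | succ n ih =>
    have hinit : Measurable (fun e : Fin (n + 2) → ℝ => Fin.init e) := by
      apply measurable_pi_lambda
      intro i
      exact measurable_pi_apply _
    exact measurable_snoc_comp (ih.comp hinit)
      (((hf (n + 1)).comp ((measurable_pi_apply (Fin.last n)).comp (ih.comp hinit))).add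
        (measurable_pi_apply (Fin.last (n + 1))))

/-- For a chain structural model `X₀ = c + E₀`, `X_{n+1} = f_{n+1}(X_n) + E_{n+1}` with
independent noises, the joint law of `(X₀, …, X_n)` factorizes as the composition of the
law of `X₀` with the chain of conditional Markov kernels `x ↦ law(f_m(x) + E_m)`. -/
theorem stmt_7
    {Ω : Type*} [MeasurableSpace Ω] (P : Measure Ω) [IsProbabilityMeasure P]
    (E : ℕ → Ω → ℝ) (hE : ∀ n, Measurable (E n))
    (hindep : iIndepFun E P)
    (c : ℝ) (f : ℕ → ℝ → ℝ) (hf : ∀ n, Measurable (f n))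
    (X : ℕ → Ω → ℝ)
    (hX0 : X 0 = fun ω => c + E 0 ω)
    (hXs : ∀ n, X (n + 1) = fun ω => f (n + 1) (X n ω) + E (n + 1) ω) :
    ∀ n : ℕ, P.map (fun ω (i : Fin (n + 1)) => X i ω)
      = chainMeasure (P.map (X 0)) (fun m x => P.map (fun ω => f m x + E m ω)) n := by
  -- measurability of the X's
  have hXm : ∀ n, Measurable (X n) := by
    intro n
    induction n with
    | zero => rw [hX0]; exact measurable_const.add (hE 0)
    | succ n ih => rw [hXs n]; exact ((hf (n + 1)).comp ih).add (hE (n + 1))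
  -- the state tuple is the chainFun applied to the noise tuple
  have hchain : ∀ n (ω : Ω),
      (fun i : Fin (n + 1) => X i ω) = chainFun c f n (fun i : Fin (n + 1) => E i ω) := by
    intro n
    induction n with
    | zero =>
      intro ω
      funext i
      have : (i : ℕ) = 0 := by omega
      simp [chainFun, this, hX0]
    | succ n ih =>
      intro ω
      have hinit : Fin.init (fun i : Fin (n + 2) => E i ω) = fun i : Fin (n + 1) => E i ω := by
        funext i; simp [Fin.init]
      funext i
      refine Fin.lastCases ?_ ?_ i
      · simp only [chainFun, hinit, ← ih ω, Fin.snoc_last, Fin.val_last]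
        rw [hXs n]
      · intro j
        simp only [chainFun, hinit, ← ih ω, Fin.snoc_castSucc, Fin.coe_castSucc]
  -- the noise tuple is independent of the next noise
  have hVE : ∀ n, IndepFun (fun ω (i : Fin (n + 1)) => X i ω) (E (n + 1)) P := by
    intro n
    have hS : IndepFun (fun ω (i : (Finset.range (n + 1) : Finset ℕ)) => E i ω)
        (fun ω (i : ({n + 1} : Finset ℕ)) => E i ω) P := by
      refine hindep.indepFun_finset (Finset.range (n + 1)) {n + 1} ?_ hE
      simp [Finset.disjoint_singleton_right]
    have h1 : IndepFun (fun ω (i : Fin (n + 1)) => E i ω) (E (n + 1)) P := by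
      have := hS.comp (φ := fun (v : (Finset.range (n + 1) : Finset ℕ) → ℝ)
          (i : Fin (n + 1)) => v ⟨i, by simp [i.isLt]⟩)
        (ψ := fun (v : ({n + 1} : Finset ℕ) → ℝ) => v ⟨n + 1, by simp⟩)
        (measurable_pi_lambda _ (fun i => measurable_pi_apply _)) (measurable_pi_apply (X := fun _ => ℝ) _)
      exact this
    have h2 := h1.comp (measurable_chainFun c f hf n) measurable_id
    have heq : (chainFun c f n) ∘ (fun ω (i : Fin (n + 1)) => E i ω)
        = fun ω (i : Fin (n + 1)) => X i ω := by
      funext ω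
      exact (hchain n ω).symm
    rwa [Function.comp_def, ← Function.comp_def (chainFun c f n), heq] at h2
  -- main induction
  intro n
  induction n with
  | zero =>
    rw [chainMeasure, Measure.map_map (g := fun (x : ℝ) (_ : Fin 1) => x)
      (measurable_pi_lambda _ fun _ => measurable_id) (hXm 0)]
    congr 1
    funext ω
    funext i
    have : (i : ℕ) = 0 := by omega
    simp [this]
  | succ n ih =>
    have hV : Measurable (fun ω (i : Fin (n + 1)) => X i ω) :=
      measurable_pi_lambda _ (fun i => hXm i)
    haveI : IsProbabilityMeasure (P.map (E (n + 1))) :=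
      Measure.isProbabilityMeasure_map (hE (n + 1)).aemeasurable
    haveI : IsProbabilityMeasure (P.map (fun ω (i : Fin (n + 1)) => X i ω)) :=
      Measure.isProbabilityMeasure_map hV.aemeasurable
    -- the joint law of (tuple, next noise) is a product measure
    have hprod : P.map (fun ω => ((fun i : Fin (n + 1) => X i ω), E (n + 1) ω))
        = (P.map (fun ω (i : Fin (n + 1)) => X i ω)).prod (P.map (E (n + 1))) := by
      exact (indepFun_iff_map_prod_eq_prod_map_map hV.aemeasurable
        (hE (n + 1)).aemeasurable).mp (hVE n)
    set μV := P.map (fun ω (i : Fin (n + 1)) => X i ω) with hμV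
    set ν := P.map (E (n + 1)) with hν
    -- the map building the new tuple from (old tuple, noise)
    set g : ((Fin (n + 1) → ℝ) × ℝ) → (Fin (n + 2) → ℝ) :=
      fun p => Fin.snoc p.1 (f (n + 1) (p.1 (Fin.last n)) + p.2) with hg
    have hgm : Measurable g := by
      refine measurable_snoc_comp measurable_fst ?_
      exact ((hf (n + 1)).comp ((measurable_pi_apply (Fin.last n)).comp measurable_fst)).add
        measurable_snd
    -- LHS computation
    have hLHS : P.map (fun ω (i : Fin (n + 2)) => X i ω) = (μV.prod ν).map g := by
      rw [← hprod, Measure.map_map hgm (hV.prodMk (hE (n + 1)))]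
      congr 1
      funext ω
      funext i
      refine Fin.lastCases ?_ ?_ i
      · simp only [Function.comp_apply, hg, Fin.snoc_last, Fin.val_last]
        rw [hXs n]
      · intro j
        simp only [Function.comp_apply, hg, Fin.snoc_castSucc, Fin.coe_castSucc]
    -- turn the product-map into a bind
    have hbind : (μV.prod ν).map g
        = μV.bind (fun v => ν.map (fun e => g (v, e))) := by
      rw [Measure.prod_def]
      have hF : Measurable (fun v : Fin (n + 1) → ℝ => ν.map (Prod.mk v)) :=
        Measurable.map_prodMk_left
      rw [← Measure.bind_dirac_eq_map _ hgm,
        Measure.bind_bind (g := fun x => Measure.dirac (g x)) hF.aemeasurable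
          ((Measure.measurable_dirac).comp hgm).aemeasurable]
      congr 1
      funext v
      rw [Measure.bind_dirac_eq_map _ hgm, Measure.map_map hgm measurable_prodMk_left]
      rfl
    rw [hLHS, hbind, chainMeasure, ← ih]
    congr 1
    funext v
    have hker : P.map (fun ω => f (n + 1) (v (Fin.last n)) + E (n + 1) ω)
        = ν.map (fun e => f (n + 1) (v (Fin.last n)) + e) := by
      rw [hν]
      exact (Measure.map_map (measurable_const.add measurable_id) (hE (n + 1))).symm
    rw [hker]
    have h := Measure.map_map (μ := ν) (f := fun e => f (n + 1) (v (Fin.last n)) + e)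
      (g := fun y : ℝ => (Fin.snoc v y : Fin (n + 2) → ℝ))
      (measurable_snoc_comp measurable_const measurable_id)
      (measurable_const.add measurable_id)
    rw [h]
    congr 1
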